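/- Let E be a normed vector lattice and F a Dedekind complete vector lattice. Then the set L_nob(E,F) of norm to order bounded operators from E to F is an ideal in the vector lattice L_r(E,F) of regular operators: if S is regular, T is norm to order bounded, and |S| ≤ |T|, then S is norm to order bounded. More precisely, if |Tx| ≤ ‖x‖·t for all x ∈ E with t ∈ F⁺, then |Sx| ≤ 2‖x‖·t for all x ∈ E. -/

import Mathlib

/-- The norm to order bounded operators form an ideal in the
regular operators: if `T` is norm to order bounded with bound `t` (i.e.
`|Tx| ≤ ‖x‖·t`), `S` is regular, and `|S| ≤ |T|` (the moduli being
characterised by the Riesz–Kantorovich formula), then `|Sx| ≤ 2‖x‖·t`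
for all `x`; in particular `S` is norm to order bounded. -/
theorem stmt_5 {E F : Type*}
    [NormedAddCommGroup E] [Lattice E] [HasSolidNorm E] [IsOrderedAddMonoid E]
    [NormedSpace ℝ E]
    [Lattice F] [AddCommGroup F] [CovariantClass F F (· + ·) (· ≤ ·)]
    [Module ℝ F]
    (hDed : ∀ A : Set F, A.Nonempty → BddAbove A → ∃ a, IsLUB A a)
    (S T absS absT : E →ₗ[ℝ] F) (t : F) (ht : 0 ≤ t)
    (hT : ∀ x : E, |T x| ≤ ‖x‖ • t)
    (habsT : ∀ x : E, 0 ≤ x →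
      IsLUB {z : F | ∃ y : E, |y| ≤ x ∧ z = |T y|} (absT x))
    (habsS : ∀ x : E, 0 ≤ x →
      IsLUB {z : F | ∃ y : E, |y| ≤ x ∧ z = |S y|} (absS x))
    (hle : ∀ x : E, 0 ≤ x → absS x ≤ absT x) :
    ∀ x : E, |S x| ≤ (2 * ‖x‖) • t := by
  intro x
  by_cases hx : x = 0
  · subst hx
    simp
  · have hx' : (0:ℝ) < ‖x‖ := norm_pos_iff.mpr hx
    have h1 : |S x| ≤ absS |x| :=
      (habsS |x| (abs_nonneg x)).1 ⟨x, le_refl _, rfl⟩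
    have h2 : absS |x| ≤ absT |x| := hle |x| (abs_nonneg x)
    have h3 : absT |x| ≤ (2 * ‖x‖) • t := by
      refine (habsT |x| (abs_nonneg x)).2 ?_
      rintro z ⟨y, hy, rfl⟩
      have hyn : ‖y‖ ≤ ‖x‖ := by
        have := HasSolidNorm.solid (α := E) (by simpa using hy)
        simpa using this
      -- the gap coefficient
      set c : ℝ := 2 * ‖x‖ - ‖y‖ with hc
      have hc0 : 0 ≤ c := by
        have : ‖y‖ ≤ 2 * ‖x‖ := by nlinarith [norm_nonneg y]
        linarith
      -- realize c • t ≥ 0 via a vector of norm c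
      set u : E := (c / ‖x‖) • x with hu
      have hun : ‖u‖ = c := by
        rw [hu, norm_smul, Real.norm_eq_abs, abs_of_nonneg (div_nonneg hc0 hx'.le)]
        field_simp
      have h0c : (0:F) ≤ c • t := by
        have := hT u
        rw [hun] at this
        exact le_trans (abs_nonneg (T u)) this
      have : ‖y‖ • t ≤ (2 * ‖x‖) • t := by
        calc ‖y‖ • t ≤ ‖y‖ • t + c • t := le_add_of_nonneg_right h0c
          _ = (‖y‖ + c) • t := (add_smul _ _ _).symm
          _ = (2 * ‖x‖) • t := by rw [hc]; ring_nf
      exact le_trans (hT y) this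
    exact le_trans h1 (le_trans h2 h3)
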